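/- Every path with at least three edges and every cycle with at least three edges is universal antimagic. -/

import Mathlib

open scoped Classical

noncomputable def edgeFS {V : Type*} [Fintype V] (G : SimpleGraph V) : Finset (Sym2 V) :=
  G.edgeSet.toFinset

noncomputable def vSum {V : Type*} [Fintype V] (G : SimpleGraph V) (φ : Sym2 V → ℝ) (v : V) : ℝ :=
  ∑ e ∈ (edgeFS G).filter (fun e => v ∈ e), φ e

noncomputable def vProd {V : Type*} [Fintype V] (G : SimpleGraph V) (φ : Sym2 V → ℝ) (v : V) : ℝ :=
  ∏ e ∈ (edgeFS G).filter (fun e => v ∈ e), φ e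

/-- `G` has an antimagic `L`-labeling for every set `L` of `(edgeFS G).card` positive reals. -/
def UnivAntimagic {V : Type*} [Fintype V] (G : SimpleGraph V) : Prop :=
  ∀ L : Finset ℝ, (∀ x ∈ L, 0 < x) → L.card = (edgeFS G).card →
    ∃ φ : Sym2 V → ℝ, Set.BijOn φ ↑(edgeFS G) ↑L ∧ Function.Injective (vSum G φ)

/-- swap of `p` and `p+1` as a function on ℕ -/
def sw (p i : ℕ) : ℕ := if i = p then p + 1 else if i = p + 1 then p else i

lemma sw_invol (p i : ℕ) : sw p (sw p i) = i := by
  unfold sw; split_ifs <;> first | omega | exact (by assumption : False).elim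

lemma sw_zero (p : ℕ) (hp : 1 ≤ p) : sw p 0 = 0 := by
  unfold sw; split_ifs <;> first | omega | exact (by assumption : False).elim

lemma sw_lt (p i m : ℕ) (hm : p + 1 < m ∨ m ≤ p) (hi : i < m) : sw p i < m := by
  unfold sw; split_ifs <;> first | omega | exact (by assumption : False).elim

lemma sw_step (p i : ℕ) (hp : 1 ≤ p) : sw p i < sw p (i + 2) := by
  unfold sw; split_ifs <;> first | omega | exact (by assumption : False).elim

/-- chain monotonicity helper -/
lemma chainlt (m : ℕ) (t : ℕ → ℝ) (h : ∀ i, i + 2 < m → t i < t (i + 1)) :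
    ∀ i j, i < j → j + 1 < m → t i < t j := by
  intro i j hij hjm
  induction j with
  | zero => omega
  | succ k ih =>
    rcases Nat.lt_succ_iff_lt_or_eq.mp hij with h' | h'
    · exact (ih h' (by omega)).trans (h k (by omega))
    · subst h'; exact h i (by omega)

lemma core (m : ℕ) (hm : 3 ≤ m) (c : ℕ → ℝ)
    (hc : ∀ i j, i < j → j < m → c i < c j) :
    ∃ b : ℕ → ℝ, b 0 = c 0 ∧
      (∀ i j, i < m → j < m → b i = b j → i = j) ∧
      (Finset.range m).image b = (Finset.range m).image c ∧
      (∀ i j, i < m → j < m →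
        b i + b ((i + 1) % m) = b j + b ((j + 1) % m) → i = j) := by
  classical
  have hcinj : ∀ i j, i < m → j < m → c i = c j → i = j := by
    intro i j hi hj hij
    by_contra hne
    rcases Nat.lt_or_ge i j with h | h
    · exact absurd hij (ne_of_lt (hc i j h hj))
    · rcases Nat.lt_or_ge j i with h' | h'
      · exact absurd hij.symm (ne_of_lt (hc j i h' hi))
      · omega
  have main : ∀ p : ℕ, 1 ≤ p → (p + 1 < m ∨ m ≤ p) →
      (∀ i, i + 1 < m → c (sw p i) + c (sw p (i + 1)) ≠ c (sw p (m - 1)) + c 0) →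
      (∃ b : ℕ → ℝ, b 0 = c 0 ∧
        (∀ i j, i < m → j < m → b i = b j → i = j) ∧
        (Finset.range m).image b = (Finset.range m).image c ∧
        (∀ i j, i < m → j < m →
          b i + b ((i + 1) % m) = b j + b ((j + 1) % m) → i = j)) := by
    intro p hp hpm hwrap
    refine ⟨fun i => c (sw p i), by show c (sw p 0) = c 0; rw [sw_zero p hp], ?_, ?_, ?_⟩
    · intro i j hi hj hij
      have h1 := hcinj _ _ (sw_lt p i m hpm hi) (sw_lt p j m hpm hj) hij
      have h2 := congrArg (sw p) h1
      rwa [sw_invol, sw_invol] at h2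
    · apply Finset.ext; intro x
      simp only [Finset.mem_image, Finset.mem_range]
      constructor
      · rintro ⟨i, hi, rfl⟩; exact ⟨sw p i, sw_lt p i m hpm hi, rfl⟩
      · rintro ⟨i, hi, rfl⟩; exact ⟨sw p i, sw_lt p i m hpm hi, by rw [sw_invol]⟩
    · set t : ℕ → ℝ := fun i => c (sw p i) + c (sw p ((i + 1) % m)) with ht
      have tchain : ∀ i, i + 1 < m → t i = c (sw p i) + c (sw p (i + 1)) := by
        intro i h; simp only [ht]; rw [Nat.mod_eq_of_lt (by omega)]
      have tstep : ∀ i, i + 2 < m → t i < t (i + 1) := by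
        intro i h
        rw [tchain i (by omega), tchain (i + 1) (by omega)]
        have h2 := sw_step p i hp
        have h3 := hc _ _ h2 (sw_lt p (i + 2) m hpm (by omega))
        linarith
      have tmono := chainlt m t tstep
      have twrap : t (m - 1) = c (sw p (m - 1)) + c 0 := by
        simp only [ht]
        have h0 : (m - 1 + 1) % m = 0 := by
          have h1 : m - 1 + 1 = m := by omega
          rw [h1, Nat.mod_self]
        rw [h0, sw_zero p hp]
      intro i j hi hj hij
      change t i = t j at hij
      rcases lt_trichotomy i j with h | h | h
      · exfalso
        rcases Nat.lt_or_ge (j + 1) m with hj' | hj'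
        · exact absurd hij (ne_of_lt (tmono i j h hj'))
        · have hj1 : j = m - 1 := by omega
          rw [hj1, twrap] at hij
          rw [tchain i (by omega)] at hij
          exact hwrap i (by omega) hij
      · exact h
      · exfalso
        rcases Nat.lt_or_ge (i + 1) m with hi' | hi'
        · exact absurd hij.symm (ne_of_lt (tmono j i h hi'))
        · have hi1 : i = m - 1 := by omega
          rw [hi1, twrap] at hij
          rw [tchain j (by omega)] at hij
          exact hwrap j (by omega) hij.symm
  by_cases hbad : ∃ k, 1 ≤ k ∧ k + 3 ≤ m ∧ c (m - 1) + c 0 = c k + c (k + 1)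
  case neg =>
    push_neg at hbad
    apply main m (by omega) (Or.inr le_rfl)
    intro i hi
    have swid : ∀ x, x < m → sw m x = x := by
      intro x hx; unfold sw; split_ifs <;> first | omega | exact (by assumption : False).elim
    rw [swid i (by omega), swid (i + 1) hi, swid (m - 1) (by omega)]
    rcases Nat.eq_zero_or_pos i with h0 | h0
    · subst h0
      have h1 := hc 1 (m - 1) (by omega) (by omega)
      intro h; linarith
    rcases Nat.lt_or_ge (i + 3) (m + 1) with h3 | h3
    · exact fun h => hbad i h0 (by omega) h.symm
    · have hi2 : i = m - 2 := by omega
      subst hi2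
      have h1 := hc 0 (m - 2) (by omega) (by omega)
      have h2 : m - 2 + 1 = m - 1 := by omega
      rw [h2]
      intro h; linarith
  case pos =>
    obtain ⟨k, hk1, hk3, hW⟩ := hbad
    by_cases hk2 : 2 ≤ k
    · -- p = k - 1
      apply main (k - 1) (by omega) (Or.inl (by omega))
      have swm : sw (k - 1) (m - 1) = m - 1 := by unfold sw; split_ifs <;> first | omega | exact (by assumption : False).elim
      rw [swm, hW]
      set s : ℕ → ℝ := fun i => c (sw (k - 1) i) + c (sw (k - 1) (i + 1)) with hs
      have step : ∀ i, i + 2 < m → s i < s (i + 1) := by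
        intro i h
        have h2 := sw_step (k - 1) i (by omega)
        have h3 := hc _ _ h2 (sw_lt (k - 1) (i + 2) m (Or.inl (by omega)) (by omega))
        simp only [hs]; linarith
      have smono := chainlt m s step
      have e1 : sw (k - 1) k = k - 1 := by unfold sw; split_ifs <;> first | omega | exact (by assumption : False).elim
      have e2 : sw (k - 1) (k + 1) = k + 1 := by unfold sw; split_ifs <;> first | omega | exact (by assumption : False).elim
      have e3 : sw (k - 1) (k + 2) = k + 2 := by unfold sw; split_ifs <;> first | omega | exact (by assumption : False).elim
      have hsk : s k = c (k - 1) + c (k + 1) := by simp only [hs, e1, e2]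
      have hsk1 : s (k + 1) = c (k + 1) + c (k + 2) := by simp only [hs, e2, e3]
      have h1 : s k < c k + c (k + 1) := by
        have := hc (k - 1) k (by omega) (by omega); rw [hsk]; linarith
      have h2 : c k + c (k + 1) < s (k + 1) := by
        have := hc k (k + 2) (by omega) (by omega); rw [hsk1]; linarith
      intro i hi
      rcases le_or_gt i k with h | h
      · rcases Nat.eq_or_lt_of_le h with h' | h'
        · subst h'; exact ne_of_lt h1
        · exact ne_of_lt ((smono i k h' (by omega)).trans h1)
      · rcases Nat.eq_or_lt_of_le h with h' | h'
        · rw [← h']; exact ne_of_gt h2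
        · exact ne_of_gt (h2.trans (smono (k + 1) i h' (by omega)))
    · -- k = 1, p = 2
      have hk : k = 1 := by omega
      subst hk
      apply main 2 (by omega) (Or.inl (by omega))
      set s : ℕ → ℝ := fun i => c (sw 2 i) + c (sw 2 (i + 1)) with hs
      have step : ∀ i, i + 2 < m → s i < s (i + 1) := by
        intro i h
        have h2 := sw_step 2 i (by omega)
        have h3 := hc _ _ h2 (sw_lt 2 (i + 2) m (Or.inl (by omega)) (by omega))
        simp only [hs]; linarith
      have smono := chainlt m s step
      have e0 : sw 2 0 = 0 := by norm_num [sw]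
      have e1 : sw 2 1 = 1 := by norm_num [sw]
      have e2 : sw 2 2 = 3 := by norm_num [sw]
      have hs0 : s 0 = c 0 + c 1 := by simp only [hs, e0, e1]
      have hs1 : s 1 = c 1 + c 3 := by simp only [hs, e1, e2]
      have hbounds : s 0 < c (sw 2 (m - 1)) + c 0 ∧ c (sw 2 (m - 1)) + c 0 < s 1 := by
        rcases Nat.lt_or_ge m 5 with h5 | h5
        · have hm4 : m = 4 := by omega
          have em : sw 2 (m - 1) = 2 := by unfold sw; split_ifs <;> first | omega | exact (by assumption : False).elim
          rw [em]
          have q1 := hc 1 2 (by omega) (by omega)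
          have q2 := hc 0 1 (by omega) (by omega)
          have q3 := hc 2 3 (by omega) (by omega)
          constructor
          · rw [hs0]; linarith
          · rw [hs1]; linarith
        · have em : sw 2 (m - 1) = m - 1 := by unfold sw; split_ifs <;> first | omega | exact (by assumption : False).elim
          rw [em, hW]
          have q1 := hc 0 2 (by omega) (by omega)
          have q2 := hc 2 3 (by omega) (by omega)
          constructor
          · rw [hs0]; linarith
          · rw [hs1]; linarith
      intro i hi
      rcases Nat.eq_zero_or_pos i with h0 | h0
      · subst h0; exact ne_of_lt hbounds.1
      rcases Nat.eq_or_lt_of_le h0 with h' | h'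
      · rw [← h']; exact ne_of_gt hbounds.2
      · exact ne_of_gt (hbounds.2.trans (smono 1 i h' (by omega)))

theorem path_univ (n : ℕ) (hn : 3 ≤ n) : UnivAntimagic (SimpleGraph.pathGraph (n + 1)) := by
  intro L hpos hcard
  set E : Fin n → Sym2 (Fin (n + 1)) := fun i => s(i.castSucc, i.succ) with hE
  have hEinj : Function.Injective E := by
    intro i j h
    rw [hE] at h
    simp only [Sym2.eq_iff] at h
    apply Fin.ext
    rcases h with ⟨h1, h2⟩ | ⟨h1, h2⟩ <;>
      [skip; skip] <;>
      · have g1 := congrArg Fin.val h1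
        have g2 := congrArg Fin.val h2
        simp only [Fin.coe_castSucc, Fin.val_succ] at g1 g2
        omega
  have hedge : edgeFS (SimpleGraph.pathGraph (n + 1)) = Finset.univ.image E := by
    apply Finset.ext; intro e
    induction e using Sym2.ind with
    | _ u v =>
      simp only [edgeFS, Set.mem_toFinset, SimpleGraph.mem_edgeSet, SimpleGraph.pathGraph_adj,
        Finset.mem_image, Finset.mem_univ, true_and, hE]
      constructor
      · rintro (h | h)
        · refine ⟨⟨u.val, by omega⟩, ?_⟩
          rw [Sym2.eq_iff]; left
          constructor <;> apply Fin.ext <;>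
            simp only [Fin.coe_castSucc, Fin.val_succ] <;> omega
        · refine ⟨⟨v.val, by omega⟩, ?_⟩
          rw [Sym2.eq_iff]; right
          constructor <;> apply Fin.ext <;>
            simp only [Fin.coe_castSucc, Fin.val_succ] <;> omega
      · rintro ⟨i, hi⟩
        rw [Sym2.eq_iff] at hi
        rcases hi with ⟨h1, h2⟩ | ⟨h1, h2⟩
        · left
          have g1 := congrArg Fin.val h1
          have g2 := congrArg Fin.val h2
          simp only [Fin.coe_castSucc, Fin.val_succ] at g1 g2
          omega
        · right
          have g1 := congrArg Fin.val h1
          have g2 := congrArg Fin.val h2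
          simp only [Fin.coe_castSucc, Fin.val_succ] at g1 g2
          omega
  have hcards : L.card = n := by
    rw [hcard, hedge, Finset.card_image_of_injective _ hEinj, Finset.card_univ,
      Fintype.card_fin]
  set f := L.orderIsoOfFin hcards with hf
  have hfpos : ∀ a : Fin n, (0 : ℝ) < (f a : ℝ) := fun a => hpos _ (f a).2
  set c : ℕ → ℝ := fun j =>
    if j = 0 then 0 else if h2 : j - 1 < n then (f ⟨j - 1, h2⟩ : ℝ) else 0 with hcdef
  have hc : ∀ i j, i < j → j < n + 1 → c i < c j := by
    intro i j hij hj
    simp only [hcdef]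
    rw [if_neg (by omega : ¬ j = 0), dif_pos (by omega : j - 1 < n)]
    by_cases hi0 : i = 0
    · rw [if_pos hi0]; exact hfpos _
    · rw [if_neg hi0, dif_pos (by omega : i - 1 < n)]
      have hlt : (⟨i - 1, by omega⟩ : Fin n) < ⟨j - 1, by omega⟩ := by
        simp only [Fin.lt_def]; omega
      exact_mod_cast f.strictMono hlt
  obtain ⟨b, hb0, hbinj, hbimg, hbsum⟩ := core (n + 1) (by omega) c hc
  have hb0' : b 0 = 0 := by rw [hb0]; simp [hcdef]
  have hcval : ∀ (j : ℕ) (hj : j < n), c (j + 1) = (f ⟨j, hj⟩ : ℝ) := by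
    intro j hj
    simp only [hcdef, Nat.add_sub_cancel]
    rw [if_neg (by omega), dif_pos hj]
  set φ : Sym2 (Fin (n + 1)) → ℝ := Sym2.lift
    ⟨fun u v => if u.val + 1 = v.val then b (u.val + 1)
      else if v.val + 1 = u.val then b (v.val + 1) else 0, by
        intro x y
        by_cases h1 : x.val + 1 = y.val <;> by_cases h2 : y.val + 1 = x.val <;>
          simp [h1, h2] <;> omega⟩ with hφ
  have hφE : ∀ i : Fin n, φ (E i) = b (i.val + 1) := by
    intro i
    rw [hφ, hE]
    simp only [Sym2.lift_mk]
    rw [if_pos (by simp [Fin.coe_castSucc, Fin.val_succ])]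
    simp
  have hmemL : ∀ j, 1 ≤ j → j ≤ n → b j ∈ L := by
    intro j h1 h2
    have hmem : b j ∈ (Finset.range (n + 1)).image b :=
      Finset.mem_image_of_mem b (Finset.mem_range.mpr (by omega))
    rw [hbimg] at hmem
    obtain ⟨k, hk, hkeq⟩ := Finset.mem_image.mp hmem
    rw [Finset.mem_range] at hk
    have hk0 : k ≠ 0 := by
      intro h0; subst h0
      rw [← hb0] at hkeq
      have := hbinj _ _ (by omega) (by omega) hkeq
      omega
    rw [← hkeq]
    simp only [hcdef]
    rw [if_neg hk0, dif_pos (by omega : k - 1 < n)]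
    exact (f _).2
  refine ⟨φ, ⟨?_, ?_, ?_⟩, ?_⟩
  · -- MapsTo
    intro e he
    rw [hedge] at he
    simp only [Finset.coe_image, Set.mem_image, Finset.mem_coe] at he
    obtain ⟨i, _, rfl⟩ := he
    rw [hφE]
    exact hmemL _ (by omega) (by omega)
  · -- InjOn
    intro e he e' he' hee
    rw [hedge] at he he'
    simp only [Finset.coe_image, Set.mem_image, Finset.mem_coe] at he he'
    obtain ⟨i, _, rfl⟩ := he
    obtain ⟨i', _, rfl⟩ := he'
    rw [hφE, hφE] at hee
    have := hbinj _ _ (by omega) (by omega) hee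
    exact congrArg E (Fin.ext (by omega))
  · -- SurjOn
    intro x hx
    obtain ⟨idx, hidx⟩ : ∃ idx : Fin n, (f idx : ℝ) = x :=
      ⟨f.symm ⟨x, hx⟩, by simp⟩
    have hcx : c (idx.val + 1) = x := by
      rw [hcval idx.val idx.isLt, hidx]
    have hmem : x ∈ (Finset.range (n + 1)).image c := by
      rw [← hcx]
      exact Finset.mem_image_of_mem c (Finset.mem_range.mpr (by omega))
    rw [← hbimg] at hmem
    obtain ⟨k, hk, hkeq⟩ := Finset.mem_image.mp hmem
    rw [Finset.mem_range] at hk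
    have hk0 : k ≠ 0 := by
      intro h0; subst h0
      rw [hb0'] at hkeq
      have := hpos x hx
      linarith
    have hkn : k - 1 < n := by omega
    refine ⟨E ⟨k - 1, hkn⟩, ?_, ?_⟩
    · have hmm : E ⟨k - 1, hkn⟩ ∈ edgeFS (SimpleGraph.pathGraph (n + 1)) := by
        rw [hedge]
        exact Finset.mem_image_of_mem _ (Finset.mem_univ _)
      exact Finset.mem_coe.mpr hmm
    · rw [hφE]
      have hk1 : k - 1 + 1 = k := by omega
      simp only [hk1]
      exact hkeq
  · -- injectivity of vSum
    have key : ∀ v : Fin (n + 1),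
        vSum (SimpleGraph.pathGraph (n + 1)) φ v = b v.val + b ((v.val + 1) % (n + 1)) := by
      intro v
      have hfil0 : (edgeFS (SimpleGraph.pathGraph (n + 1))).filter (fun e => v ∈ e) =
          (Finset.univ.filter (fun i => v ∈ E i)).image E := by
        apply Finset.ext; intro e
        simp only [Finset.mem_filter, Finset.mem_image, Finset.mem_univ, true_and, hedge]
        constructor
        · rintro ⟨⟨i, -, rfl⟩, hv⟩; exact ⟨i, hv, rfl⟩
        · rintro ⟨i, hv, rfl⟩; exact ⟨⟨i, rfl⟩, hv⟩
      unfold vSum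
      rw [Finset.filter_congr_decidable]
      rw [hfil0, Finset.sum_image (fun x _ y _ h => hEinj h)]
      have hmem : ∀ i : Fin n, (v ∈ E i) ↔ (v.val = i.val ∨ v.val = i.val + 1) := by
        intro i
        rw [hE]
        simp only [Sym2.mem_iff]
        rw [Fin.ext_iff, Fin.ext_iff]
        simp only [Fin.coe_castSucc, Fin.val_succ]
      rcases Nat.eq_zero_or_pos v.val with h0 | h0
      · have hfil : Finset.univ.filter (fun i => v ∈ E i) = {(⟨0, by omega⟩ : Fin n)} := by
          apply Finset.ext; intro i
          simp only [Finset.mem_filter, Finset.mem_univ, true_and, Finset.mem_singleton,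
            hmem, Fin.ext_iff]
          omega
        rw [hfil, Finset.sum_singleton, hφE]
        rw [Nat.mod_eq_of_lt (by omega), h0, hb0']
        norm_num
      rcases Nat.lt_or_ge v.val n with hvn | hvn
      · have hfil : Finset.univ.filter (fun i => v ∈ E i) =
            ({⟨v.val - 1, by omega⟩, ⟨v.val, hvn⟩} : Finset (Fin n)) := by
          apply Finset.ext; intro i
          simp only [Finset.mem_filter, Finset.mem_univ, true_and, Finset.mem_insert,
            Finset.mem_singleton, hmem, Fin.ext_iff]
          omega
        rw [hfil, Finset.sum_pair (by
          simp only [ne_eq, Fin.mk.injEq]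
          omega)]
        rw [hφE, hφE]
        rw [Nat.mod_eq_of_lt (by omega)]
        have hv1 : v.val - 1 + 1 = v.val := by omega
        rw [hv1]
      · have hv : v.val = n := by omega
        have hfil : Finset.univ.filter (fun i => v ∈ E i) = {(⟨n - 1, by omega⟩ : Fin n)} := by
          apply Finset.ext; intro i
          simp only [Finset.mem_filter, Finset.mem_univ, true_and, Finset.mem_singleton,
            hmem, Fin.ext_iff]
          omega
        rw [hfil, Finset.sum_singleton, hφE]
        have h1 : n - 1 + 1 = n := by omega
        have h2 : (v.val + 1) % (n + 1) = 0 := by rw [hv]; simp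
        rw [h1, h2, hb0', hv]
        norm_num
    intro u v huv
    rw [key, key] at huv
    exact Fin.ext (hbsum _ _ (by omega) (by omega) huv)

theorem cycle_univ (n : ℕ) (hn : 3 ≤ n) : UnivAntimagic (SimpleGraph.cycleGraph n) := by
  obtain ⟨N, rfl⟩ : ∃ N, n = N + 3 := ⟨n - 3, by omega⟩
  set m := N + 3 with hm
  intro L hpos hcard
  have hvadd : ∀ u : Fin m, (u + 1).val = (u.val + 1) % m := by
    intro u; simp [Fin.val_add, Fin.val_one]
  have hone : (1 : Fin m).val = 1 := by simp [Fin.val_one]; exact Nat.mod_eq_of_lt (by omega)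
  have hadj : ∀ u v : Fin m, (SimpleGraph.cycleGraph m).Adj u v ↔ (v = u + 1 ∨ u = v + 1) := by
    intro u v
    rw [SimpleGraph.cycleGraph_adj]
    constructor
    · rintro (h | h)
      · right; rw [sub_eq_iff_eq_add] at h; rw [h]; exact add_comm 1 v
      · left; rw [sub_eq_iff_eq_add] at h; rw [h]; exact add_comm 1 u
    · rintro (h | h)
      · right; rw [h]; exact add_sub_cancel_left u 1
      · left; rw [h]; exact add_sub_cancel_left v 1
  have hnoteq : ∀ u v : Fin m, ¬(v = u + 1 ∧ u = v + 1) := by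
    rintro u v ⟨h1, h2⟩
    rw [h1] at h2
    have g := congrArg Fin.val h2
    rw [hvadd, hvadd] at g
    have hu := u.isLt
    rcases Nat.lt_or_ge (u.val + 1) m with h | h
    · rw [Nat.mod_eq_of_lt h] at g
      rcases Nat.lt_or_ge (u.val + 2) m with h' | h'
      · rw [Nat.mod_eq_of_lt h'] at g; omega
      · have : u.val + 2 = m := by omega
        rw [this, Nat.mod_self] at g; omega
    · have h' : u.val + 1 = m := by omega
      rw [h', Nat.mod_self] at g
      simp at g
      rw [Nat.mod_eq_of_lt (by omega : 1 < m)] at g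
      omega
  set E : Fin m → Sym2 (Fin m) := fun i => s(i, i + 1) with hE
  have hEinj : Function.Injective E := by
    intro i j h
    rw [hE] at h
    simp only [Sym2.eq_iff] at h
    rcases h with ⟨h1, _⟩ | ⟨h1, h2⟩
    · exact h1
    · exact absurd ⟨h1, h2.symm⟩ (hnoteq j i)
  have hedge : edgeFS (SimpleGraph.cycleGraph m) = Finset.univ.image E := by
    apply Finset.ext; intro e
    induction e using Sym2.ind with
    | _ u v =>
      simp only [edgeFS, Set.mem_toFinset, SimpleGraph.mem_edgeSet,
        Finset.mem_image, Finset.mem_univ, true_and, hE]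
      rw [hadj]
      constructor
      · rintro (h | h)
        · exact ⟨u, by rw [Sym2.eq_iff]; left; exact ⟨rfl, h.symm⟩⟩
        · exact ⟨v, by rw [Sym2.eq_iff]; right; exact ⟨rfl, h.symm⟩⟩
      · rintro ⟨i, hi⟩
        rw [Sym2.eq_iff] at hi
        rcases hi with ⟨h1, h2⟩ | ⟨h1, h2⟩
        · left; rw [← h1, ← h2]
        · right; rw [← h1, ← h2]
  have hcards : L.card = m := by
    rw [hcard, hedge, Finset.card_image_of_injective _ hEinj, Finset.card_univ,
      Fintype.card_fin]
  set f := L.orderIsoOfFin hcards with hf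
  set c : ℕ → ℝ := fun j => if h : j < m then (f ⟨j, h⟩ : ℝ) else 0 with hcdef
  have hc : ∀ i j, i < j → j < m → c i < c j := by
    intro i j hij hj
    simp only [hcdef]
    rw [dif_pos hj, dif_pos (by omega : i < m)]
    have hlt : (⟨i, by omega⟩ : Fin m) < ⟨j, hj⟩ := by simp only [Fin.lt_def]; omega
    exact_mod_cast f.strictMono hlt
  obtain ⟨b, hb0, hbinj, hbimg, hbsum⟩ := core m (by omega) c hc
  set φ : Sym2 (Fin m) → ℝ := Sym2.lift
    ⟨fun u v => if v = u + 1 then b u.val else if u = v + 1 then b v.val else 0, by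
      intro x y
      beta_reduce
      by_cases h1 : y = x + 1
      · by_cases h2 : x = y + 1
        · exact absurd ⟨h1, h2⟩ (hnoteq x y)
        · subst h1
          rw [if_pos rfl, if_neg h2, if_pos rfl]
      · by_cases h2 : x = y + 1
        · subst h2
          rw [if_neg h1, if_pos rfl, if_pos rfl]
        · rw [if_neg h1, if_neg h2, if_neg h2, if_neg h1]⟩ with hφ
  have hφE : ∀ i : Fin m, φ (E i) = b i.val := by
    intro i
    rw [hφ, hE]
    simp only [Sym2.lift_mk]
    simp
  have hmemL : ∀ j, j < m → b j ∈ L := by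
    intro j hj
    have hmem : b j ∈ (Finset.range m).image b :=
      Finset.mem_image_of_mem b (Finset.mem_range.mpr hj)
    rw [hbimg] at hmem
    obtain ⟨k, hk, hkeq⟩ := Finset.mem_image.mp hmem
    rw [Finset.mem_range] at hk
    rw [← hkeq]
    simp only [hcdef]
    rw [dif_pos hk]
    exact (f _).2
  refine ⟨φ, ⟨?_, ?_, ?_⟩, ?_⟩
  · intro e he
    rw [hedge] at he
    simp only [Finset.coe_image, Set.mem_image, Finset.mem_coe] at he
    obtain ⟨i, _, rfl⟩ := he
    rw [hφE]
    exact hmemL _ i.isLt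
  · intro e he e' he' hee
    rw [hedge] at he he'
    simp only [Finset.coe_image, Set.mem_image, Finset.mem_coe] at he he'
    obtain ⟨i, _, rfl⟩ := he
    obtain ⟨i', _, rfl⟩ := he'
    rw [hφE, hφE] at hee
    have := hbinj _ _ i.isLt i'.isLt hee
    exact congrArg E (Fin.ext this)
  · intro x hx
    obtain ⟨idx, hidx⟩ : ∃ idx : Fin m, (f idx : ℝ) = x :=
      ⟨f.symm ⟨x, hx⟩, by simp⟩
    have hcx : c idx.val = x := by
      simp only [hcdef]
      rw [dif_pos idx.isLt]
      rw [← hidx]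
    have hmem : x ∈ (Finset.range m).image c := by
      rw [← hcx]
      exact Finset.mem_image_of_mem c (Finset.mem_range.mpr idx.isLt)
    rw [← hbimg] at hmem
    obtain ⟨k, hk, hkeq⟩ := Finset.mem_image.mp hmem
    rw [Finset.mem_range] at hk
    refine ⟨E ⟨k, hk⟩, ?_, ?_⟩
    · have hmm : E ⟨k, hk⟩ ∈ edgeFS (SimpleGraph.cycleGraph m) := by
        rw [hedge]
        exact Finset.mem_image_of_mem _ (Finset.mem_univ _)
      exact Finset.mem_coe.mpr hmm
    · rw [hφE]; exact hkeq
  · have key : ∀ v : Fin m,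
        vSum (SimpleGraph.cycleGraph m) φ v =
          b (v - 1).val + b (((v - 1).val + 1) % m) := by
      intro v
      have hfil0 : (edgeFS (SimpleGraph.cycleGraph m)).filter (fun e => v ∈ e) =
          (Finset.univ.filter (fun i => v ∈ E i)).image E := by
        apply Finset.ext; intro e
        simp only [Finset.mem_filter, Finset.mem_image, Finset.mem_univ, true_and, hedge]
        constructor
        · rintro ⟨⟨i, -, rfl⟩, hv⟩; exact ⟨i, hv, rfl⟩
        · rintro ⟨i, hv, rfl⟩; exact ⟨⟨i, rfl⟩, hv⟩
      have hmem : ∀ i : Fin m, (v ∈ E i) ↔ (i = v ∨ i = v - 1) := by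
        intro i
        rw [hE]
        simp only [Sym2.mem_iff]
        constructor
        · rintro (h | h)
          · left; exact h.symm
          · right; rw [h]; exact (add_sub_cancel_right i 1).symm
        · rintro (h | h)
          · left; exact h.symm
          · right; rw [h]; exact (sub_add_cancel v 1).symm
      have hfil : Finset.univ.filter (fun i => v ∈ E i) = ({v, v - 1} : Finset (Fin m)) := by
        apply Finset.ext; intro i
        simp only [Finset.mem_filter, Finset.mem_univ, true_and, Finset.mem_insert,
          Finset.mem_singleton, hmem]
      have hvne : v ≠ v - 1 := by
        intro h
        have h2 : v - 1 + 1 = v := sub_add_cancel v 1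
        rw [← h] at h2
        have h3 : (1 : Fin m) = 0 := left_eq_add.mp h2.symm
        have h4 := congrArg Fin.val h3
        rw [hone] at h4
        simp at h4
      unfold vSum
      rw [Finset.filter_congr_decidable]
      rw [hfil0, Finset.sum_image (fun x _ y _ h => hEinj h), hfil,
        Finset.sum_pair hvne, hφE, hφE]
      have hval : ((v - 1).val + 1) % m = v.val := by
        have h2 : v - 1 + 1 = v := sub_add_cancel v 1
        have h3 := congrArg Fin.val h2
        rw [hvadd] at h3
        exact h3
      rw [hval]
      ring
    intro u v huv
    rw [key, key] at huv
    have h1 := hbsum _ _ (u - 1).isLt (v - 1).isLt huv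
    have h2 : u - 1 = v - 1 := Fin.ext h1
    have h3 := congrArg (· + 1) h2
    simpa [sub_add_cancel] using h3

/-- Every path with at least three edges and every cycle with at least
three edges is universal antimagic. -/
theorem stmt_18 (n : ℕ) (hn : 3 ≤ n) :
    UnivAntimagic (SimpleGraph.pathGraph (n + 1)) ∧
    UnivAntimagic (SimpleGraph.cycleGraph n) :=
  ⟨path_univ n hn, cycle_univ n hn⟩
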